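/- arXiv:1308.2992 — 3 statements merged into one kernel-verified Lean document; each statement's English description precedes it below -/
import Mathlib

section
/- Let $I=\{1,\dots,n\}$, $m=2n$, and $\mathbf{i}=(1,2,\dots,n,1,2,\dots,n)$. For $1\le k\le n$ define ${}^*\varepsilon_k=\varepsilon_k+\sum_{\ell=1}^{k-1}a_{\ell k}\varepsilon_\ell$ and $\varepsilon_k^*=\varepsilon_k-\varepsilon_{k+n}+\sum_{\ell=k+1}^{n}a_{\ell k}\varepsilon_\ell$ in $\mathbb{Z}^{2n}$. Then for every $k\in\{1,\dots,n\}$ one has $\varphi_\mathbf{i}(\varepsilon_k)=-\rho_\mathbf{i}^-({}^*\varepsilon_k)$ and $\varphi_\mathbf{i}(\varepsilon_{n+k})=-\rho_\mathbf{i}^-(\varepsilon_k^*)$; equivalently, $(\rho_\mathbf{i}^-)^{-1}\varphi_\mathbf{i}(\mathbf{f},\mathbf{e})=-(\mathbf{e},0)^*-{}^*(\mathbf{f},0)$ for all $\mathbf{f},\mathbf{e}\in\mathbb{Z}^n$. -/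
open Finset

/-- The weight lattice `𝒫`: the free abelian group with basis `{αᵢ, ωᵢ : i ∈ I}`,
represented by pairs of coefficient vectors (first component: coefficients of the `αᵢ`,
second component: coefficients of the `ωᵢ`). -/
abbrev PLat (n : ℕ) := (Fin n → ℤ) × (Fin n → ℤ)

/-- The coroot lattice `𝒬^∨`: the free abelian group with basis `{αᵢ^∨ : i ∈ I}`,
represented by coefficient vectors. -/
abbrev QvLat (n : ℕ) := Fin n → ℤ

variable {n : ℕ}

/-- The basis element `α_j^∨` of `𝒬^∨`. -/
def coroot (j : Fin n) : QvLat n := fun k => if k = j then 1 else 0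

/-- The basis element `α_j` of `𝒫`. -/
def alP (j : Fin n) : PLat n := (fun k => if k = j then 1 else 0, 0)

/-- The basis element `ω_j` of `𝒫`. -/
def omP (j : Fin n) : PLat n := (0, fun k => if k = j then 1 else 0)

/-- The biadditive pairing `𝒬^∨ × 𝒫 → ℤ` with `(αᵢ^∨, α_j) = a_{ij}` and
`(αᵢ^∨, ω_j) = δ_{ij}`. -/
def pairQP (A : Fin n → Fin n → ℤ) (x : QvLat n) (lam : PLat n) : ℤ :=
  (∑ a, ∑ b, x a * A a b * lam.1 b) + ∑ a, x a * lam.2 a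

/-- The simple reflection `sᵢ` on `𝒫`: `sᵢ α_j = α_j - a_{ij} αᵢ`,
`sᵢ ω_j = ω_j - δ_{ij} αᵢ`. -/
def sP (A : Fin n → Fin n → ℤ) (a : Fin n) (lam : PLat n) : PLat n :=
  (fun j => if j = a then lam.1 a - ((∑ k, A a k * lam.1 k) + lam.2 a) else lam.1 j,
   lam.2)

/-- The simple reflection `sᵢ^∨` on `𝒬^∨`: `sᵢ^∨ α_j^∨ = α_j^∨ - a_{ji} αᵢ^∨`. -/
def sQ (A : Fin n → Fin n → ℤ) (a : Fin n) (x : QvLat n) : QvLat n :=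
  fun j => if j = a then x a - ∑ k, A k a * x k else x j

/-- `w_ℓ = s_{i₁} ∘ ⋯ ∘ s_{i_ℓ}` on `𝒫` (with `w₀ = id`). -/
def wP (A : Fin n → Fin n → ℤ) (ii : ℕ → Fin n) : ℕ → PLat n → PLat n
  | 0 => id
  | (l+1) => wP A ii l ∘ sP A (ii (l+1))

/-- `w_ℓ^∨ = s_{i₁}^∨ ∘ ⋯ ∘ s_{i_ℓ}^∨` on `𝒬^∨` (with `w₀ = id`). -/
def wQ (A : Fin n → Fin n → ℤ) (ii : ℕ → Fin n) : ℕ → QvLat n → QvLat n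
  | 0 => id
  | (l+1) => wQ A ii l ∘ sQ A (ii (l+1))

/-- `k⁺ = min({ℓ : k < ℓ ≤ m, i_ℓ = i_k} ∪ {m+1})`. -/
noncomputable def kplus (ii : ℕ → Fin n) (m k : ℕ) : ℕ :=
  sInf ({l | k < l ∧ l ≤ m ∧ ii l = ii k} ∪ {m+1})

/-- `k⁻ = max({ℓ : 1 ≤ ℓ < k, i_ℓ = i_k} ∪ {0})`. -/
noncomputable def kminus (ii : ℕ → Fin n) (k : ℕ) : ℕ :=
  sSup ({l | 1 ≤ l ∧ l < k ∧ ii l = ii k} ∪ {0})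

/-- The standard basis vector `ε_k` of `ℤ^m` (1-based index), with the convention
`ε_s = 0` for `s ∉ {1,…,m}`. -/
def eps (m k : ℕ) : Fin m → ℤ := fun j => if (j : ℕ) + 1 = k then 1 else 0

/-- `φ_𝐢(ε_k) = -ε_k - ε_{k⁻} - ∑_{ℓ : ℓ < k < ℓ⁺} a_{i_ℓ i_k} ε_ℓ`. -/
noncomputable def phiE (A : Fin n → Fin n → ℤ) (ii : ℕ → Fin n) (m k : ℕ) :
    Fin m → ℤ :=
  -(eps m k) - eps m (kminus ii k)
    - ∑ l : Fin m, (if (l:ℕ)+1 < k ∧ k < kplus ii m ((l:ℕ)+1)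
        then A (ii ((l:ℕ)+1)) (ii k) else 0) • eps m ((l:ℕ)+1)

/-- The endomorphism `φ_𝐢` of `ℤ^m`, extended additively from its values on the basis. -/
noncomputable def phiMap (A : Fin n → Fin n → ℤ) (ii : ℕ → Fin n) (m : ℕ)
    (v : Fin m → ℤ) : Fin m → ℤ :=
  ∑ k : Fin m, v k • phiE A ii m ((k:ℕ)+1)

/-- `φ'_𝐢(ε_ℓ) = -∑_{k=1}^{ℓ} (w_k^∨ α_{i_k}^∨, w_ℓ ω_{i_ℓ}) ε_k`. -/
def phiE' (A : Fin n → Fin n → ℤ) (ii : ℕ → Fin n) (m l : ℕ) : Fin m → ℤ :=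
  -∑ k : Fin m, (if (k:ℕ)+1 ≤ l then
      pairQP A (wQ A ii ((k:ℕ)+1) (coroot (ii ((k:ℕ)+1)))) (wP A ii l (omP (ii l)))
    else 0) • eps m ((k:ℕ)+1)

/-- The endomorphism `φ'_𝐢` of `ℤ^m`, extended additively from its values on the basis. -/
def phiMap' (A : Fin n → Fin n → ℤ) (ii : ℕ → Fin n) (m : ℕ)
    (v : Fin m → ℤ) : Fin m → ℤ :=
  ∑ l : Fin m, v l • phiE' A ii m ((l:ℕ)+1)

/-- `∂_𝐢 ε_k = ε_k - ε_{k⁻}`. -/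
noncomputable def derE (ii : ℕ → Fin n) (m k : ℕ) : Fin m → ℤ :=
  eps m k - eps m (kminus ii k)

/-- The endomorphism `∂_𝐢` of `ℤ^m`. -/
noncomputable def derMap (ii : ℕ → Fin n) (m : ℕ) (v : Fin m → ℤ) : Fin m → ℤ :=
  ∑ k : Fin m, v k • derE ii m ((k:ℕ)+1)

/-- `∫_𝐢 ε_k = ε_k + ε_{k⁻} + ε_{(k⁻)⁻} + ⋯` (summing along the chain `k > k⁻ > ⋯ > 0`). -/
noncomputable def intE (ii : ℕ → Fin n) (m : ℕ) (k : ℕ) : Fin m → ℤ :=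
  if h : kminus ii k < k then eps m k + intE ii m (kminus ii k) else eps m k
termination_by k
decreasing_by exact h

/-- The endomorphism `∫_𝐢` of `ℤ^m`. -/
noncomputable def intMap (ii : ℕ → Fin n) (m : ℕ) (v : Fin m → ℤ) : Fin m → ℤ :=
  ∑ k : Fin m, v k • intE ii m ((k:ℕ)+1)

/-- The skew-symmetric biadditive form `Λ_𝐢` on `ℤ^m` with
`Λ_𝐢(ε_k, ε_ℓ) = sgn(k-ℓ) c_{i_k i_ℓ}` where `c_{ij} = dᵢ a_{ij}`. -/
def LamF (A : Fin n → Fin n → ℤ) (d : Fin n → ℤ) (ii : ℕ → Fin n) (m : ℕ)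
    (a b : Fin m → ℤ) : ℤ :=
  ∑ k : Fin m, ∑ l : Fin m, a k * b l *
    ((((k:ℕ):ℤ) - ((l:ℕ):ℤ)).sign *
      (d (ii ((k:ℕ)+1)) * A (ii ((k:ℕ)+1)) (ii ((l:ℕ)+1))))

/-- The biadditive form `Φ_𝐢` on `ℤ^m` with `Φ_𝐢(ε_k,ε_ℓ) = -d_{i_k}` if `k = ℓ`,
`= -c_{i_ℓ i_k}` if `ℓ < k`, and `= 0` if `ℓ > k`. -/
def PhiF (A : Fin n → Fin n → ℤ) (d : Fin n → ℤ) (ii : ℕ → Fin n) (m : ℕ)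
    (a b : Fin m → ℤ) : ℤ :=
  ∑ k : Fin m, ∑ l : Fin m, a k * b l *
    (if (k:ℕ) = (l:ℕ) then -(d (ii ((k:ℕ)+1)))
     else if (l:ℕ) < (k:ℕ) then
       -(d (ii ((l:ℕ)+1)) * A (ii ((l:ℕ)+1)) (ii ((k:ℕ)+1)))
     else 0)

/-- The entry `b_{pk}` of the exchange matrix `B̃_𝐢`. -/
noncomputable def bcoef (A : Fin n → Fin n → ℤ) (ii : ℕ → Fin n) (m p k : ℕ) : ℤ :=
  if p = kminus ii k then -1
  else if p < k ∧ k < kplus ii m p ∧ kplus ii m p < kplus ii m k then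
    -(A (ii p) (ii k))
  else if k < p ∧ p < kplus ii m k ∧ kplus ii m k < kplus ii m p then
    A (ii p) (ii k)
  else if p = kplus ii m k then 1
  else 0

/-- The column `𝐛^k = ∑_p b_{pk} ε_p ∈ ℤ^m` of the exchange matrix. -/
noncomputable def bvec (A : Fin n → Fin n → ℤ) (ii : ℕ → Fin n) (m k : ℕ) :
    Fin m → ℤ :=
  fun p => bcoef A ii m ((p:ℕ)+1) k

/-- `ρ_𝐢⁺(ε_k) = ε_k + ∑_{ℓ<k, ℓ⁺=m+1} a_{i_ℓ i_k} ε_ℓ`. -/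
noncomputable def rhoPE (A : Fin n → Fin n → ℤ) (ii : ℕ → Fin n) (m k : ℕ) :
    Fin m → ℤ :=
  eps m k + ∑ l : Fin m, (if (l:ℕ)+1 < k ∧ kplus ii m ((l:ℕ)+1) = m+1
      then A (ii ((l:ℕ)+1)) (ii k) else 0) • eps m ((l:ℕ)+1)

/-- `ρ_𝐢⁻(ε_k) = ε_k - ∑_{ℓ≤k, ℓ⁺=m+1} a_{i_ℓ i_k} ε_ℓ`. -/
noncomputable def rhoME (A : Fin n → Fin n → ℤ) (ii : ℕ → Fin n) (m k : ℕ) :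
    Fin m → ℤ :=
  eps m k - ∑ l : Fin m, (if (l:ℕ)+1 ≤ k ∧ kplus ii m ((l:ℕ)+1) = m+1
      then A (ii ((l:ℕ)+1)) (ii k) else 0) • eps m ((l:ℕ)+1)

/-- The endomorphism `ρ_𝐢⁺` of `ℤ^m`. -/
noncomputable def rhoPMap (A : Fin n → Fin n → ℤ) (ii : ℕ → Fin n) (m : ℕ)
    (v : Fin m → ℤ) : Fin m → ℤ :=
  ∑ k : Fin m, v k • rhoPE A ii m ((k:ℕ)+1)

/-- The endomorphism `ρ_𝐢⁻` of `ℤ^m`. -/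
noncomputable def rhoMMap (A : Fin n → Fin n → ℤ) (ii : ℕ → Fin n) (m : ℕ)
    (v : Fin m → ℤ) : Fin m → ℤ :=
  ∑ k : Fin m, v k • rhoME A ii m ((k:ℕ)+1)

/-- `𝐚_λ = -∑_{k=1}^m (w_k^∨ α_{i_k}^∨, w_m λ) ε_k ∈ ℤ^m`. -/
def avec (A : Fin n → Fin n → ℤ) (ii : ℕ → Fin n) (m : ℕ) (lam : PLat n) :
    Fin m → ℤ :=
  fun k => -(pairQP A (wQ A ii ((k:ℕ)+1) (coroot (ii ((k:ℕ)+1)))) (wP A ii m lam))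

/-- `|𝐚| = ∑_{k=1}^m a_k α_{i_k} ∈ 𝒬 ⊆ 𝒫`. -/
def degP (ii : ℕ → Fin n) (m : ℕ) (a : Fin m → ℤ) : PLat n :=
  (fun j => ∑ k : Fin m, if ii ((k:ℕ)+1) = j then a k else 0, 0)

/-- The pairing `(μ, λ) = ∑ mᵢ dᵢ (αᵢ^∨, λ)` for `μ = ∑ mᵢ αᵢ ∈ 𝒬` and `λ ∈ 𝒫`
(induced by identifying `αᵢ` with `dᵢ αᵢ^∨`). -/
def pairAl (A : Fin n → Fin n → ℤ) (d : Fin n → ℤ) (mu lam : PLat n) : ℤ :=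
  ∑ j, mu.1 j * (d j * pairQP A (coroot j) lam)

/-- `{}^*ε_k = ε_k + ∑_{ℓ=1}^{k-1} a_{ℓk} ε_ℓ` in `ℤ^{2n}` (for `1 ≤ k ≤ n`). -/
def starE (A : Fin n → Fin n → ℤ) (ii : ℕ → Fin n) (k : ℕ) : Fin (2*n) → ℤ :=
  eps (2*n) k + ∑ l : Fin n,
    (if (l:ℕ)+1 < k then A (ii ((l:ℕ)+1)) (ii k) else 0) • eps (2*n) ((l:ℕ)+1)

/-- `ε_k^* = ε_k - ε_{k+n} + ∑_{ℓ=k+1}^{n} a_{ℓk} ε_ℓ` in `ℤ^{2n}` (for `1 ≤ k ≤ n`). -/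
def costarE (A : Fin n → Fin n → ℤ) (ii : ℕ → Fin n) (k : ℕ) : Fin (2*n) → ℤ :=
  eps (2*n) k - eps (2*n) (k+n) + ∑ l : Fin n,
    (if k < (l:ℕ)+1 then A (ii ((l:ℕ)+1)) (ii k) else 0) • eps (2*n) ((l:ℕ)+1)


section Helpers
variable {n : ℕ}

lemma eps_zero (m : ℕ) : eps m 0 = 0 := by
  funext j; simp [eps]

lemma map_pt {m : ℕ} (c : Fin m → ℤ) (j : Fin m) :
    (∑ l : Fin m, c l • eps m ((l : ℕ) + 1)) j = c j := by
  simp only [Finset.sum_apply, Pi.smul_apply, eps, smul_eq_mul]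
  rw [Finset.sum_eq_single j]
  · simp
  · intro b _ hb
    rw [if_neg (fun h => hb (Fin.ext (by omega))), mul_zero]
  · simp

lemma finn_sum_pt (c : Fin n → ℤ) (j : Fin (2 * n)) :
    (∑ p : Fin n, c p • eps (2 * n) ((p : ℕ) + 1)) j
      = if h : (j : ℕ) < n then c ⟨(j : ℕ), h⟩ else 0 := by
  simp only [Finset.sum_apply, Pi.smul_apply, eps, smul_eq_mul]
  split
  · next h =>
    rw [Finset.sum_eq_single ⟨(j : ℕ), h⟩]
    · simp
    · intro b _ hb
      rw [if_neg (fun hh => hb (Fin.ext (by simp only [Fin.val_mk]; omega))), mul_zero]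
    · simp
  · next h =>
    refine Finset.sum_eq_zero fun p _ => ?_
    rw [if_neg (fun hh => h (by omega)), mul_zero]
end Helpers

section Helpers2
variable {n : ℕ}

lemma sel_sum {m : ℕ} (k : ℕ) (hk1 : 1 ≤ k) (hk2 : k ≤ m) (F : ℕ → Fin m → ℤ) :
    ∑ l : Fin m, eps m k l • F ((l : ℕ) + 1) = F k := by
  have hk : k - 1 < m := by omega
  rw [Finset.sum_eq_single (⟨k - 1, hk⟩ : Fin m)]
  · have h1 : eps m k ⟨k - 1, hk⟩ = 1 := by
      simp only [eps, Fin.val_mk]; rw [if_pos (by omega)]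
    have h2 : ((⟨k - 1, hk⟩ : Fin m) : ℕ) + 1 = k := by simp only [Fin.val_mk]; omega
    rw [h1, h2, one_smul]
  · intro b _ hb
    have : eps m k b = 0 := by
      simp only [eps]; rw [if_neg (fun h => hb (Fin.ext (by simp only [Fin.val_mk]; omega)))]
    rw [this, zero_smul]
  · simp

lemma phiMap_eps (A : Fin n → Fin n → ℤ) (ii : ℕ → Fin n) {m k : ℕ}
    (hk1 : 1 ≤ k) (hk2 : k ≤ m) :
    phiMap A ii m (eps m k) = phiE A ii m k :=
  sel_sum k hk1 hk2 _

lemma rhoMMap_eps (A : Fin n → Fin n → ℤ) (ii : ℕ → Fin n) {m k : ℕ}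
    (hk1 : 1 ≤ k) (hk2 : k ≤ m) :
    rhoMMap A ii m (eps m k) = rhoME A ii m k :=
  sel_sum k hk1 hk2 _

lemma rhoMMap_add (A : Fin n → Fin n → ℤ) (ii : ℕ → Fin n) (m : ℕ) (u v : Fin m → ℤ) :
    rhoMMap A ii m (u + v) = rhoMMap A ii m u + rhoMMap A ii m v := by
  unfold rhoMMap
  rw [← Finset.sum_add_distrib]
  exact Finset.sum_congr rfl fun l _ => by rw [Pi.add_apply, add_smul]

lemma rhoMMap_sub (A : Fin n → Fin n → ℤ) (ii : ℕ → Fin n) (m : ℕ) (u v : Fin m → ℤ) :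
    rhoMMap A ii m (u - v) = rhoMMap A ii m u - rhoMMap A ii m v := by
  unfold rhoMMap
  rw [← Finset.sum_sub_distrib]
  exact Finset.sum_congr rfl fun l _ => by rw [Pi.sub_apply, sub_smul]

lemma rhoMMap_smul (A : Fin n → Fin n → ℤ) (ii : ℕ → Fin n) (m : ℕ) (c : ℤ) (v : Fin m → ℤ) :
    rhoMMap A ii m (c • v) = c • rhoMMap A ii m v := by
  unfold rhoMMap
  rw [Finset.smul_sum]
  exact Finset.sum_congr rfl fun l _ => by rw [Pi.smul_apply, smul_eq_mul, mul_smul]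

lemma rhoMMap_sum (A : Fin n → Fin n → ℤ) (ii : ℕ → Fin n) (m : ℕ) {α : Type*}
    (s : Finset α) (f : α → Fin m → ℤ) :
    rhoMMap A ii m (∑ a ∈ s, f a) = ∑ a ∈ s, rhoMMap A ii m (f a) := by
  unfold rhoMMap
  rw [Finset.sum_comm]
  exact Finset.sum_congr rfl fun l _ => by
    rw [Finset.sum_apply, Finset.sum_smul]

end Helpers2

section Word
variable {n : ℕ} (hn : 0 < n) (ii : ℕ → Fin n)
  (hii : ∀ k, 1 ≤ k → k ≤ 2*n → (ii k : ℕ) = (k - 1) % n)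

include hn hii

lemma ii_val : ∀ t, 1 ≤ t → t ≤ 2*n → (ii t : ℕ) = if t ≤ n then t - 1 else t - 1 - n := by
  intro t h1 h2
  rw [hii t h1 h2]
  split
  · next h => exact Nat.mod_eq_of_lt (by omega)
  · next h =>
    rw [Nat.mod_eq_sub_mod (by omega), Nat.mod_eq_of_lt (by omega)]

lemma ii_period {k : ℕ} (h1 : 1 ≤ k) (h2 : k ≤ n) : ii (k + n) = ii k := by
  apply Fin.ext
  rw [ii_val hn ii hii k h1 (by omega), ii_val hn ii hii (k+n) (by omega) (by omega),
    if_pos h2, if_neg (by omega : ¬ k + n ≤ n)]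
  omega

lemma kminus_small {k : ℕ} (h1 : 1 ≤ k) (h2 : k ≤ n) : kminus ii k = 0 := by
  have hset : ({l | 1 ≤ l ∧ l < k ∧ ii l = ii k} ∪ {0} : Set ℕ) = {0} := by
    ext t
    simp only [Set.mem_union, Set.mem_setOf_eq, Set.mem_singleton_iff]
    constructor
    · rintro (⟨ht1, ht2, ht3⟩ | h)
      · exfalso
        have := congrArg Fin.val ht3
        rw [ii_val hn ii hii t ht1 (by omega), ii_val hn ii hii k h1 (by omega)] at this
        simp only [if_pos (by omega : t ≤ n), if_pos h2] at this
        omega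
      · exact h
    · intro h; exact Or.inr h
  rw [kminus, hset, csSup_singleton]

lemma kminus_big {k : ℕ} (h1 : n < k) (h2 : k ≤ 2*n) : kminus ii k = k - n := by
  have hset : ({l | 1 ≤ l ∧ l < k ∧ ii l = ii k} ∪ {0} : Set ℕ) = {k - n, 0} := by
    ext t
    simp only [Set.mem_union, Set.mem_setOf_eq, Set.mem_insert_iff, Set.mem_singleton_iff]
    constructor
    · rintro (⟨ht1, ht2, ht3⟩ | h)
      · left
        have := congrArg Fin.val ht3
        rw [ii_val hn ii hii t ht1 (by omega), ii_val hn ii hii k (by omega) h2,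
          if_neg (by omega : ¬ k ≤ n)] at this
        split at this <;> omega
      · exact Or.inr h
    · rintro (h | h)
      · subst h
        refine Or.inl ⟨by omega, by omega, Fin.ext ?_⟩
        rw [ii_val hn ii hii (k-n) (by omega) (by omega), ii_val hn ii hii k (by omega) h2,
          if_pos (by omega : k - n ≤ n), if_neg (by omega : ¬ k ≤ n)]
        omega
      · exact Or.inr h
  rw [kminus, hset]
  rw [csSup_pair]
  omega

lemma kplus_small {k : ℕ} (h1 : 1 ≤ k) (h2 : k ≤ n) : kplus ii (2*n) k = k + n := by
  have hset : ({l | k < l ∧ l ≤ 2*n ∧ ii l = ii k} ∪ {2*n+1} : Set ℕ) = {k + n, 2*n+1} := by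
    ext t
    simp only [Set.mem_union, Set.mem_setOf_eq, Set.mem_insert_iff, Set.mem_singleton_iff]
    constructor
    · rintro (⟨ht1, ht2, ht3⟩ | h)
      · left
        have := congrArg Fin.val ht3
        rw [ii_val hn ii hii t (by omega) ht2, ii_val hn ii hii k h1 (by omega),
          if_pos h2] at this
        split at this <;> omega
      · exact Or.inr h
    · rintro (h | h)
      · subst h
        refine Or.inl ⟨by omega, by omega, Fin.ext ?_⟩
        rw [ii_val hn ii hii (k+n) (by omega) (by omega), ii_val hn ii hii k h1 (by omega),
          if_pos h2, if_neg (by omega : ¬ k + n ≤ n)]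
        omega
      · exact Or.inr h
  rw [kplus, hset, csInf_pair]
  omega

lemma kplus_big {k : ℕ} (h1 : n < k) (h2 : k ≤ 2*n) : kplus ii (2*n) k = 2*n + 1 := by
  have hset : ({l | k < l ∧ l ≤ 2*n ∧ ii l = ii k} ∪ {2*n+1} : Set ℕ) = {2*n+1} := by
    ext t
    simp only [Set.mem_union, Set.mem_setOf_eq, Set.mem_singleton_iff]
    constructor
    · rintro (⟨ht1, ht2, ht3⟩ | h)
      · exfalso
        have := congrArg Fin.val ht3
        rw [ii_val hn ii hii t (by omega) ht2, ii_val hn ii hii k (by omega) h2,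
          if_neg (by omega : ¬ t ≤ n), if_neg (by omega : ¬ k ≤ n)] at this
        omega
      · exact h
    · intro h; exact Or.inr h
  rw [kplus, hset, csInf_singleton]

lemma rhoME_small (A : Fin n → Fin n → ℤ) {k : ℕ} (h1 : 1 ≤ k) (h2 : k ≤ n) :
    rhoME A ii (2*n) k = eps (2*n) k := by
  unfold rhoME
  rw [sub_eq_self]
  refine Finset.sum_eq_zero fun l _ => ?_
  rw [if_neg, zero_smul]
  rintro ⟨hl1, hl2⟩
  by_cases hl : (l:ℕ) + 1 ≤ n
  · rw [kplus_small hn ii hii (by omega) hl] at hl2; omega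
  · omega

end Word

/-- for `𝐢 = (1,…,n,1,…,n)` and `1 ≤ k ≤ n` one has
`φ_𝐢(ε_k) = -ρ_𝐢⁻({}^*ε_k)` and `φ_𝐢(ε_{n+k}) = -ρ_𝐢⁻(ε_k^*)`. -/
theorem phi_doubled_word {n : ℕ} (hn : 0 < n)
    (A : Fin n → Fin n → ℤ) (d : Fin n → ℤ)
    (hA : ∀ i, A i i = 2) (hd : ∀ i, 0 < d i)
    (hsym : ∀ i j, d i * A i j = d j * A j i)
    (ii : ℕ → Fin n)
    (hii : ∀ k, 1 ≤ k → k ≤ 2*n → (ii k : ℕ) = (k - 1) % n)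
    (k : ℕ) (hk1 : 1 ≤ k) (hk2 : k ≤ n) :
    phiMap A ii (2*n) (eps (2*n) k) = -(rhoMMap A ii (2*n) (starE A ii k)) ∧
    phiMap A ii (2*n) (eps (2*n) (n+k)) = -(rhoMMap A ii (2*n) (costarE A ii k)) := by
  constructor
  · rw [phiMap_eps A ii hk1 (by omega)]
    have hR : rhoMMap A ii (2*n) (starE A ii k)
        = eps (2*n) k + ∑ l : Fin n,
            (if (l:ℕ)+1 < k then A (ii ((l:ℕ)+1)) (ii k) else 0) • eps (2*n) ((l:ℕ)+1) := by
      unfold starE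
      rw [rhoMMap_add, rhoMMap_eps A ii hk1 (by omega), rhoME_small hn ii hii A hk1 hk2,
        rhoMMap_sum]
      congr 1
      refine Finset.sum_congr rfl fun l _ => ?_
      rw [rhoMMap_smul, rhoMMap_eps A ii (by omega) (by omega : (l:ℕ)+1 ≤ 2*n),
        rhoME_small hn ii hii A (by omega) (by omega : (l:ℕ)+1 ≤ n)]
    rw [hR]
    unfold phiE
    rw [kminus_small hn ii hii hk1 hk2, eps_zero, sub_zero]
    funext j
    have hj := j.isLt
    simp only [Pi.sub_apply, Pi.add_apply, Pi.neg_apply, map_pt, finn_sum_pt, Fin.val_mk]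
    by_cases hjn : (j:ℕ) + 1 ≤ n
    · rw [kplus_small hn ii hii (by omega) hjn, dif_pos (by omega : (j:ℕ) < n)]
      simp only [eps]
      split_ifs <;> first | omega | (exfalso; omega) | ring1
    · rw [kplus_big hn ii hii (by omega) (by omega : (j:ℕ)+1 ≤ 2*n), dif_neg (by omega)]
      simp only [eps]
      split_ifs <;> first | omega | (exfalso; omega) | ring1
  · rw [show n + k = k + n from Nat.add_comm n k,
      phiMap_eps A ii (by omega : 1 ≤ k + n) (by omega : k + n ≤ 2*n)]
    have hR : rhoMMap A ii (2*n) (costarE A ii k)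
        = eps (2*n) k - rhoME A ii (2*n) (k+n) + ∑ l : Fin n,
            (if k < (l:ℕ)+1 then A (ii ((l:ℕ)+1)) (ii k) else 0) • eps (2*n) ((l:ℕ)+1) := by
      unfold costarE
      rw [rhoMMap_add, rhoMMap_sub, rhoMMap_eps A ii hk1 (by omega),
        rhoMMap_eps A ii (by omega : 1 ≤ k + n) (by omega : k + n ≤ 2*n),
        rhoME_small hn ii hii A hk1 hk2, rhoMMap_sum]
      congr 1
      refine Finset.sum_congr rfl fun l _ => ?_
      rw [rhoMMap_smul, rhoMMap_eps A ii (by omega) (by omega : (l:ℕ)+1 ≤ 2*n),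
        rhoME_small hn ii hii A (by omega) (by omega : (l:ℕ)+1 ≤ n)]
    rw [hR]
    unfold phiE rhoME
    rw [kminus_big hn ii hii (by omega) (by omega : k + n ≤ 2*n),
      show k + n - n = k from by omega]
    funext j
    have hj := j.isLt
    simp only [Pi.sub_apply, Pi.add_apply, Pi.neg_apply, map_pt, finn_sum_pt, Fin.val_mk]
    rw [ii_period hn ii hii hk1 hk2]
    have hY2 : (j:ℕ)+1 = k + n → A (ii ((j:ℕ)+1)) (ii k) = 2 := by
      intro h; rw [h, ii_period hn ii hii hk1 hk2]; exact hA _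
    by_cases hjn : (j:ℕ) + 1 ≤ n
    · rw [kplus_small hn ii hii (by omega) hjn, dif_pos (by omega : (j:ℕ) < n)]
      simp only [eps]
      split_ifs <;> first | omega | (exfalso; omega) | ring1
    · rw [kplus_big hn ii hii (by omega) (by omega : (j:ℕ)+1 ≤ 2*n), dif_neg (by omega)]
      simp only [eps, eq_self_iff_true, and_true]
      rcases eq_or_ne ((j:ℕ)+1) (k+n) with he | he
      · rw [hY2 he]
        split_ifs <;> first | omega | (exfalso; omega) | ring1
      · split_ifs <;> first | omega | (exfalso; omega) | ring1
end

section
/- Let $A=(a_{ij})_{1\le i,j\le n}$ be an integer matrix with $a_{ii}=2$ and $a_{ij}\le 0$ for $i\ne j$, symmetrizable by positive integers. Define the $n\times n$ matrix $B=(b_{\ell k})$ by $b_{\ell k}=\operatorname{sgn}(\ell-k)\,a_{\ell k}$, and let $\tilde B^\pm$ be the $2n\times n$ integer matrices whose first $n$ rows form $B$ and whose last $n$ rows form $\pm I_n$. Then $\mu_n(\mu_{n-1}(\cdots\mu_1(\tilde B^-)\cdots))=\tilde B^+$. -/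
/-- Matrix mutation `μ_k` of a `2n × n` integer matrix in direction `k ∈ {1,…,n}`. -/
def matMut {n : ℕ} (M : Matrix (Fin (2*n)) (Fin n) ℤ) (k : Fin n) :
    Matrix (Fin (2*n)) (Fin n) ℤ :=
  fun p j =>
    if (p : ℕ) = (k : ℕ) ∨ j = k then -M p j
    else M p j + (|M p k| * M (Fin.castLE (by omega) k) j
                  + M p k * |M (Fin.castLE (by omega) k) j|) / 2

/-- The `2n × n` matrix whose first `n` rows form the matrix `b_{ℓk} = sgn(ℓ-k) a_{ℓk}`
and whose last `n` rows form `s • Iₙ`. -/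
def tBpm {n : ℕ} (A : Fin n → Fin n → ℤ) (s : ℤ) : Matrix (Fin (2*n)) (Fin n) ℤ :=
  fun p j =>
    if h : (p : ℕ) < n then (((p:ℕ) : ℤ) - ((j:ℕ) : ℤ)).sign * A ⟨(p:ℕ), h⟩ j
    else if (p : ℕ) = n + (j : ℕ) then s else 0

/-- cyclically shifted position: indices below `k` are pushed up by `n`. -/
def cpos (n k i : ℕ) : ℤ := if i < k then (i:ℤ) + n else (i:ℤ)

/-- intermediate matrix after mutations μ_0, …, μ_{k-1}. -/
def Mstep {n : ℕ} (A : Fin n → Fin n → ℤ) (k : ℕ) : Matrix (Fin (2*n)) (Fin n) ℤ :=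
  fun p j =>
    if h : (p : ℕ) < n then (cpos n k (p:ℕ) - cpos n k (j:ℕ)).sign * A ⟨(p:ℕ), h⟩ j
    else if (p : ℕ) = n + (j : ℕ) then (if (j:ℕ) < k then 1 else -1) else 0

lemma sgn_pos {a : ℤ} (h : 0 < a) : a.sign = 1 := Int.sign_eq_one_iff_pos.mpr h
lemma sgn_neg {a : ℤ} (h : a < 0) : a.sign = -1 := Int.sign_eq_neg_one_iff_neg.mpr h

lemma step_lemma {n : ℕ} (A : Fin n → Fin n → ℤ)
    (hoff : ∀ i j, i ≠ j → A i j ≤ 0) (k : ℕ) (hk : k < n) :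
    matMut (Mstep A k) ⟨k, hk⟩ = Mstep A (k+1) := by
  funext p j
  simp only [matMut]
  by_cases hpk : (p:ℕ) = k
  · rw [if_pos (Or.inl hpk)]
    have hp : (p:ℕ) < n := by omega
    simp only [Mstep]
    rw [dif_pos hp, dif_pos hp]
    have hs : (cpos n (k+1) (p:ℕ) - cpos n (k+1) (j:ℕ)).sign
        = -(cpos n k (p:ℕ) - cpos n k (j:ℕ)).sign := by
      rw [hpk]
      unfold cpos
      rcases lt_trichotomy (j:ℕ) k with h | h | h
      · rw [if_pos (by omega : k < k+1), if_pos (by omega : (j:ℕ) < k+1),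
          if_neg (by omega : ¬ k < k), if_pos h,
          sgn_pos (by omega), sgn_neg (by omega)]
        norm_num
      · rw [h]
        simp
      · rw [if_pos (by omega : k < k+1), if_neg (by omega : ¬ (j:ℕ) < k+1),
          if_neg (by omega : ¬ k < k), if_neg (by omega : ¬ (j:ℕ) < k),
          sgn_pos (by omega), sgn_neg (by omega)]
        norm_num
    rw [hs, neg_mul]
  · by_cases hjk : j = (⟨k, hk⟩ : Fin n)
    · rw [if_pos (Or.inr hjk)]
      subst hjk
      simp only [Mstep, Fin.val_mk]
      by_cases hp : (p:ℕ) < n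
      · rw [dif_pos hp, dif_pos hp]
        have hs : (cpos n (k+1) (p:ℕ) - cpos n (k+1) k).sign
            = -(cpos n k (p:ℕ) - cpos n k k).sign := by
          unfold cpos
          rcases lt_trichotomy (p:ℕ) k with h | h | h
          · rw [if_pos (by omega : (p:ℕ) < k+1), if_pos (by omega : k < k+1),
              if_pos h, if_neg (by omega : ¬ k < k),
              sgn_neg (by omega), sgn_pos (by omega)]
            try norm_num
          · exact absurd h hpk
          · rw [if_neg (by omega : ¬ (p:ℕ) < k+1), if_pos (by omega : k < k+1),
              if_neg (by omega : ¬ (p:ℕ) < k), if_neg (by omega : ¬ k < k),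
              sgn_neg (by omega), sgn_pos (by omega)]
            try norm_num
        rw [hs, neg_mul]
      · rw [dif_neg hp, dif_neg hp]
        split_ifs <;> omega
    · rw [if_neg (by tauto)]
      have hjv : (j:ℕ) ≠ k := fun h => hjk (Fin.ext h)
      have hKj : Mstep A k (Fin.castLE (by omega) (⟨k, hk⟩ : Fin n)) j
          = -(A ⟨k, hk⟩ j) := by
        simp only [Mstep, Fin.coe_castLE, Fin.val_mk, dif_pos hk]
        have hs : (cpos n k k - cpos n k (j:ℕ)).sign = -1 := by
          unfold cpos
          rcases lt_trichotomy (j:ℕ) k with h | h | h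
          · rw [if_neg (by omega : ¬ k < k), if_pos h, sgn_neg (by omega)]
          · exact absurd h hjv
          · rw [if_neg (by omega : ¬ k < k), if_neg (by omega : ¬ (j:ℕ) < k),
              sgn_neg (by omega)]
        rw [hs]; ring
      have hle : A ⟨k, hk⟩ j ≤ 0 := hoff _ _ (Fin.ne_of_val_ne (fun h => hjv h.symm))
      have hx : Mstep A k p (⟨k, hk⟩ : Fin n) ≤ 0 := by
        simp only [Mstep, Fin.val_mk]
        by_cases hp : (p:ℕ) < n
        · rw [dif_pos hp]
          have hs : (cpos n k (p:ℕ) - cpos n k k).sign = 1 := by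
            unfold cpos
            rcases lt_trichotomy (p:ℕ) k with h | h | h
            · rw [if_pos h, if_neg (by omega : ¬ k < k), sgn_pos (by omega)]
            · exact absurd h hpk
            · rw [if_neg (by omega : ¬ (p:ℕ) < k), if_neg (by omega : ¬ k < k),
                sgn_pos (by omega)]
          rw [hs, one_mul]
          exact hoff _ _ (fun h => hpk (by
            have := congrArg Fin.val h
            simpa using this))
        · rw [dif_neg hp]
          split_ifs <;> omega
      have hnum : |Mstep A k p (⟨k, hk⟩ : Fin n)|
            * Mstep A k (Fin.castLE (by omega) (⟨k, hk⟩ : Fin n)) j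
          + Mstep A k p (⟨k, hk⟩ : Fin n)
            * |Mstep A k (Fin.castLE (by omega) (⟨k, hk⟩ : Fin n)) j| = 0 := by
        rw [hKj, abs_neg, abs_of_nonpos hle, abs_of_nonpos hx]
        ring
      rw [hnum]
      norm_num
      -- remaining : Mstep A k p j = Mstep A (k+1) p j
      simp only [Mstep]
      by_cases hp : (p:ℕ) < n
      · rw [dif_pos hp, dif_pos hp]
        have h1 : cpos n (k+1) (p:ℕ) = cpos n k (p:ℕ) := by
          unfold cpos; split_ifs <;> omega
        have h2 : cpos n (k+1) (j:ℕ) = cpos n k (j:ℕ) := by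
          unfold cpos; split_ifs <;> omega
        rw [h1, h2]
      · rw [dif_neg hp, dif_neg hp]
        split_ifs <;> omega

lemma fold_aux {n : ℕ} (A : Fin n → Fin n → ℤ)
    (hoff : ∀ i j, i ≠ j → A i j ≤ 0) :
    ∀ d k, k + d = n →
      List.foldl matMut (Mstep A k) ((List.finRange n).drop k) = Mstep A n := by
  intro d
  induction d with
  | zero =>
    intro k hkd
    have hk : k = n := by omega
    subst hk
    rw [List.drop_eq_nil_of_le (by simp)]
    rfl
  | succ d ih =>
    intro k hkd
    have hk : k < n := by omega
    have hlen : k < (List.finRange n).length := by simpa using hk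
    rw [List.drop_eq_getElem_cons hlen, List.foldl_cons]
    have hget : (List.finRange n)[k] = (⟨k, hk⟩ : Fin n) := by
      simp [List.getElem_finRange, Fin.ext_iff]
    rw [hget, step_lemma A hoff k hk]
    exact ih (k+1) (by omega)

/-- `μ_n(μ_{n-1}(⋯ μ_1(B̃⁻) ⋯)) = B̃⁺`. -/
theorem mutation_of_tB_minus {n : ℕ}
    (A : Fin n → Fin n → ℤ) (d : Fin n → ℤ)
    (hA : ∀ i, A i i = 2) (hoff : ∀ i j, i ≠ j → A i j ≤ 0)
    (hd : ∀ i, 0 < d i) (hsym : ∀ i j, d i * A i j = d j * A j i) :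
    (List.finRange n).foldl matMut (tBpm A (-1)) = tBpm A 1 := by
  have h0 : tBpm A (-1) = Mstep A 0 := by
    funext p j
    simp only [tBpm, Mstep, cpos]
    by_cases hp : (p:ℕ) < n
    · rw [dif_pos hp, dif_pos hp, if_neg (by omega : ¬ (p:ℕ) < 0),
        if_neg (by omega : ¬ (j:ℕ) < 0)]
    · rw [dif_neg hp, dif_neg hp]
      split_ifs <;> omega
  have hn : Mstep A n = tBpm A 1 := by
    funext p j
    simp only [tBpm, Mstep, cpos]
    by_cases hp : (p:ℕ) < n
    · rw [dif_pos hp, dif_pos hp, if_pos hp, if_pos j.isLt]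
      have : ((p:ℕ):ℤ) + n - (((j:ℕ):ℤ) + n) = ((p:ℕ):ℤ) - ((j:ℕ):ℤ) := by ring
      rw [this]
    · rw [dif_neg hp, dif_neg hp]
      split_ifs with h1 h2
      · rfl
      · exact absurd j.isLt h2
      · rfl
  rw [h0, ← hn, ← List.drop_zero (l := List.finRange n)]
  exact fold_aux A hoff n 0 (by omega)
end

section
/- Let $(i_1,\dots,i_n)$ be an enumeration of $I$ (each element of $I$ occurring exactly once), let $c=s_{i_1}\circ\cdots\circ s_{i_n}$, fix $1\le j\le n$, and set $\mu=\omega_{i_j}-\sum_{\ell=1}^{j}a_{i_\ell i_j}\omega_{i_\ell}\in\mathcal{P}$. Then $c\mu-\mu=\alpha_{i_j}$. -/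
open Finset

variable {n : ℕ}

/-- The second (ω-)coefficient vector of `μ`. -/
def mu2 (A : Fin n → Fin n → ℤ) (ii : ℕ → Fin n) (j : ℕ) : Fin n → ℤ :=
  fun x => (if x = ii j then 1 else 0) -
    ∑ l : Fin n, (if (l:ℕ)+1 ≤ j then A (ii ((l:ℕ)+1)) (ii j) else 0) *
      (if x = ii ((l:ℕ)+1) then 1 else 0)

lemma iinj {n : ℕ} {ii : ℕ → Fin n}
    (hinj : Function.Injective fun k : Fin n => ii ((k : ℕ) + 1))
    {s t : ℕ} (hs1 : 1 ≤ s) (hs2 : s ≤ n) (ht1 : 1 ≤ t) (ht2 : t ≤ n)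
    (h : ii s = ii t) : s = t := by
  have h' := hinj (a₁ := ⟨s - 1, by omega⟩) (a₂ := ⟨t - 1, by omega⟩)
    (by simpa [Nat.sub_add_cancel hs1, Nat.sub_add_cancel ht1] using h)
  have : s - 1 = t - 1 := congrArg Fin.val h'
  omega

lemma key {n : ℕ} (A : Fin n → Fin n → ℤ) (hA : ∀ i, A i i = 2)
    (ii : ℕ → Fin n)
    (hinj : Function.Injective fun k : Fin n => ii ((k : ℕ) + 1))
    (j : ℕ) (hj1 : 1 ≤ j) (hj2 : j ≤ n) :
    ∀ l, l ≤ n → ∀ lam : PLat n, lam.2 = mu2 A ii j →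
      lam.1 = (fun x => if x = ii j ∧ l + 1 ≤ j then 1 else 0) →
      wP A ii l lam = (fun x => if x = ii j then (1:ℤ) else 0, mu2 A ii j) := by
  intro l
  induction l with
  | zero =>
    intro _ lam h2 h1
    show lam = _
    refine Prod.ext ?_ h2
    rw [h1]; funext x
    simp [hj1]
  | succ l ih =>
    intro hl lam h2 h1
    show wP A ii l (sP A (ii (l+1)) lam) = _
    have hl' : l + 1 ≤ n := hl
    have hjl : (ii (l+1) = ii j) ↔ l + 1 = j :=
      ⟨fun h => iinj hinj (by omega) hl' hj1 hj2 h, fun h => by rw [h]⟩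
    refine ih (by omega) _ (by simpa [sP] using h2) ?_
    funext x
    by_cases hx : x = ii (l+1)
    · subst hx
      simp only [sP, if_pos rfl, h1, h2, mu2]
      have hlam1 : (if ii (l+1) = ii j ∧ l + 1 + 1 ≤ j then (1:ℤ) else 0) = 0 := by
        rw [if_neg]; rintro ⟨ha, hb⟩; rw [hjl] at ha; omega
      have hS : (∑ k, A (ii (l+1)) k * (if k = ii j ∧ l + 1 + 1 ≤ j then (1:ℤ) else 0))
          = if l + 1 + 1 ≤ j then A (ii (l+1)) (ii j) else 0 := by
        by_cases hc : l + 1 + 1 ≤ j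
        · simp only [hc, and_true, mul_ite, mul_one, mul_zero, if_true]
          exact Finset.sum_ite_eq' Finset.univ (ii j) (A (ii (l+1))) |>.trans (by simp)
        · simp [hc]
      have hT : (∑ l' : Fin n, (if (l':ℕ)+1 ≤ j then A (ii ((l':ℕ)+1)) (ii j) else 0) *
            (if ii (l+1) = ii ((l':ℕ)+1) then (1:ℤ) else 0))
          = if l + 1 ≤ j then A (ii (l+1)) (ii j) else 0 := by
        rw [Finset.sum_eq_single (⟨l, by omega⟩ : Fin n)]
        · simp
        · intro b _ hb
          have hne : ii (l+1) ≠ ii ((b:ℕ)+1) := by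
            intro h
            exact hb (hinj (a₁ := b) (a₂ := ⟨l, by omega⟩) (by simpa using h.symm))
          simp [hne]
        · simp
      rw [hlam1, hS, hT]
      by_cases hje : l + 1 = j
      · have h2' : ¬ (l + 1 + 1 ≤ j) := by omega
        have : ii (l+1) = ii j := hjl.mpr hje
        rw [this]
        simp [h2', hje, hA, hje ▸ le_refl (l+1)]
      · have hne : ii (l+1) ≠ ii j := fun h => hje (hjl.mp h)
        simp only [hne, false_and, if_false, if_neg hne]
        by_cases hlt : l + 1 ≤ j
        · have : l + 1 + 1 ≤ j := by omega
          simp [this, hlt]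
        · have : ¬ (l + 1 + 1 ≤ j) := by omega
          simp [this, hlt]
    · simp only [sP, if_neg hx, h1]
      by_cases hxj : x = ii j
      · have hne : j ≠ l + 1 := by rintro rfl; exact hx hxj
        have : (l + 1 + 1 ≤ j) ↔ (l + 1 ≤ j) := by omega
        simp [hxj, this]
      · simp [hxj]

/-- for an enumeration `(i₁,…,i_n)` of `I`, `c = s_{i₁} ∘ ⋯ ∘ s_{i_n}`,
and `μ = ω_{i_j} - ∑_{ℓ=1}^{j} a_{i_ℓ i_j} ω_{i_ℓ}`, one has `cμ - μ = α_{i_j}`. -/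
theorem coxeter_mu {n : ℕ}
    (A : Fin n → Fin n → ℤ) (d : Fin n → ℤ)
    (hA : ∀ i, A i i = 2) (hd : ∀ i, 0 < d i)
    (hsym : ∀ i j, d i * A i j = d j * A j i)
    (ii : ℕ → Fin n)
    (henum : Function.Bijective (fun k : Fin n => ii ((k : ℕ) + 1)))
    (j : ℕ) (hj1 : 1 ≤ j) (hj2 : j ≤ n) :
    wP A ii n (omP (ii j) - ∑ l : Fin n,
        (if (l:ℕ)+1 ≤ j then A (ii ((l:ℕ)+1)) (ii j) else 0) • omP (ii ((l:ℕ)+1)))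
      - (omP (ii j) - ∑ l : Fin n,
        (if (l:ℕ)+1 ≤ j then A (ii ((l:ℕ)+1)) (ii j) else 0) • omP (ii ((l:ℕ)+1)))
      = alP (ii j) := by
  set μ : PLat n := omP (ii j) - ∑ l : Fin n,
      (if (l:ℕ)+1 ≤ j then A (ii ((l:ℕ)+1)) (ii j) else 0) • omP (ii ((l:ℕ)+1)) with hμ
  have hn1 : ¬ (n + 1 ≤ j) := by omega
  have h1 : μ.1 = (fun x => if x = ii j ∧ n + 1 ≤ j then (1:ℤ) else 0) := by
    funext x
    simp [hμ, omP, Prod.fst_sub, Prod.fst_sum, hn1, apply_ite Prod.fst, Finset.sum_apply, Pi.sub_apply, ite_apply]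
  have h2 : μ.2 = mu2 A ii j := by
    funext x
    simp [hμ, omP, mu2, Prod.snd_sub, Prod.snd_sum, Finset.sum_apply, smul_eq_mul, apply_ite Prod.snd, Pi.sub_apply, ite_apply, mul_ite, mul_one, mul_zero]
    exact Finset.sum_congr rfl fun k _ => by split_ifs <;> rfl
  have hk := key A hA ii henum.injective j hj1 hj2 n le_rfl μ h2 h1
  rw [hk]
  refine Prod.ext ?_ ?_
  · show _ - μ.1 = _
    rw [h1]; funext x
    simp [alP, hn1]
  · show _ - μ.2 = _
    rw [h2]
    simp [alP]
end
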